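/- For the projective Weyl tensor W of Θ_{A,B,C,D,E} on ℂ³, the following component formulas hold: W(e₁,e₂)e₁ = W(e₁,e₂)e₂ = −(1/8)(C−D)²·e₁ + (1/8)(C−D)²·e₂; W(e₁,e₂)e₃ = 0; W(e₃,e₁)e₁ = W(e₃,e₁)e₂ = W(e₃,e₂)e₂ = (1/8)(C−D)²·e₃; W(e₂,e₃)e₁ = −(1/8)(C−D)²·e₃; W(e₃,e₁)e₃ = (1/4)(A+B)(D−C)·e₁ + (1/2)B(C−D)·e₂; W(e₂,e₃)e₃ = (1/2)A(C−D)·e₁ + (1/4)(A+B)(D−C)·e₂. -/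
import Mathlib


noncomputable section

/-- `ℂ³`. -/
abbrev V3 : Type := Fin 3 → ℂ

/-- The standard basis of `ℂ³`: `e 0 = e₁ = ∂/∂z₁`, `e 1 = e₂ = ∂/∂z₂`, `e 2 = e₃ = ∂/∂τ`. -/
def e (i : Fin 3) : V3 := Pi.single i 1

/-- The curvature tensor `R(X,Y)Z = Θ(X,Θ(Y,Z)) − Θ(Y,Θ(X,Z))`. -/
def curv (Θ : V3 →ₗ[ℂ] V3 →ₗ[ℂ] V3) (X Y Z : V3) : V3 :=
  Θ X (Θ Y Z) - Θ Y (Θ X Z)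

/-- `TrR(X,Y) = tr (Z ↦ R(X,Y)Z)`. -/
def trR (Θ : V3 →ₗ[ℂ] V3 →ₗ[ℂ] V3) (X Y : V3) : ℂ :=
  LinearMap.trace ℂ V3 ((Θ X) ∘ₗ (Θ Y) - (Θ Y) ∘ₗ (Θ X))

/-- `Ricci(Y,Z) = tr (X ↦ R(X,Y)Z)`. -/
def ricci (Θ : V3 →ₗ[ℂ] V3 →ₗ[ℂ] V3) (Y Z : V3) : ℂ :=
  LinearMap.trace ℂ V3 (Θ.flip (Θ Y Z) - (Θ Y) ∘ₗ (Θ.flip Z))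

/-- The projective Weyl tensor in dimension three. -/
def weyl (Θ : V3 →ₗ[ℂ] V3 →ₗ[ℂ] V3) (X Y Z : V3) : V3 :=
  curv Θ X Y Z - ((1/4 : ℂ) * trR Θ X Y) • Z
    - (1/2 : ℂ) • (ricci Θ Y Z • X - ricci Θ X Z • Y)
    - (1/8 : ℂ) • (trR Θ Y Z • X - trR Θ X Z • Y)

lemma tr3 (f : V3 →ₗ[ℂ] V3) : LinearMap.trace ℂ V3 f = f (e 0) 0 + f (e 1) 1 + f (e 2) 2 := by
  rw [LinearMap.trace_eq_matrix_trace ℂ (Pi.basisFun ℂ (Fin 3))]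
  simp [Matrix.trace, LinearMap.toMatrix_apply, Fin.sum_univ_three, e]

set_option maxHeartbeats 2000000 in
/-- Component formulas for the projective Weyl tensor of `Θ_{A,B,C,D,E}` on `ℂ³`
(`e₁ = e 0`, `e₂ = e 1`, `e₃ = e 2`). -/
theorem stmt_10 (A B C D E : ℂ)
    (Θ : V3 →ₗ[ℂ] V3 →ₗ[ℂ] V3)
    (hsymm : ∀ x y : V3, Θ x y = Θ y x)
    (h11 : Θ (e 0) (e 0) = C • e 0)
    (h22 : Θ (e 1) (e 1) = D • e 1)
    (h33 : Θ (e 2) (e 2) = A • e 0 + B • e 1 + E • e 2)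
    (h12 : Θ (e 0) (e 1) = (C/2) • e 0 + (D/2) • e 1)
    (h13 : Θ (e 0) (e 2) = (E/2) • e 0 + (C/2) • e 2)
    (h23 : Θ (e 1) (e 2) = (E/2) • e 1 + (D/2) • e 2)
    :
    weyl Θ (e 0) (e 1) (e 0) = -((C-D)^2/8) • e 0 + ((C-D)^2/8) • e 1 ∧
    weyl Θ (e 0) (e 1) (e 1) = -((C-D)^2/8) • e 0 + ((C-D)^2/8) • e 1 ∧
    weyl Θ (e 0) (e 1) (e 2) = 0 ∧
    weyl Θ (e 2) (e 0) (e 0) = ((C-D)^2/8) • e 2 ∧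
    weyl Θ (e 2) (e 0) (e 1) = ((C-D)^2/8) • e 2 ∧
    weyl Θ (e 2) (e 1) (e 1) = ((C-D)^2/8) • e 2 ∧
    weyl Θ (e 1) (e 2) (e 0) = -((C-D)^2/8) • e 2 ∧
    weyl Θ (e 2) (e 0) (e 2) = ((A+B)*(D-C)/4) • e 0 + (B*(C-D)/2) • e 1 ∧
    weyl Θ (e 1) (e 2) (e 2) = (A*(C-D)/2) • e 0 + ((A+B)*(D-C)/4) • e 1 := by
  have h21 : Θ (e 1) (e 0) = (C/2) • e 0 + (D/2) • e 1 := (hsymm (e 1) (e 0)).trans h12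
  have h31 : Θ (e 2) (e 0) = (E/2) • e 0 + (C/2) • e 2 := (hsymm (e 2) (e 0)).trans h13
  have h32 : Θ (e 2) (e 1) = (E/2) • e 1 + (D/2) • e 2 := (hsymm (e 2) (e 1)).trans h23
  refine ⟨?_, ?_, ?_, ?_, ?_, ?_, ?_, ?_, ?_⟩ <;>
  · simp only [weyl, curv, trR, ricci, tr3, LinearMap.sub_apply, LinearMap.comp_apply,
      LinearMap.flip_apply, LinearMap.add_apply, LinearMap.smul_apply, map_add, map_smul,
      h11, h22, h33, h12, h13, h23, h21, h31, h32]
    funext i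
    fin_cases i <;> (simp [e, Pi.single_apply]; try ring)
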